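/- Let M be a d×d matrix over Z_max and M̂ the (2d+1)×(2d+1) matrix with two diagonal copies of M, a 0 in the bottom-right corner, and -∞ elsewhere. If ρ(M) < 0 then urk(M̂) = 1, and if ρ(M) ≥ 0 then urk(M̂) ≥ 2. Consequently ρ(M) ≥ 0 if and only if urk(M̂) ≥ 2. -/

import Mathlib

open Filter

/-- The tropical (max-plus) semiring ℤ ∪ {-∞}: addition is max (lattice sup),
`+` is the tropical product with `⊥` absorbing. -/
abbrev Zmax : Type := WithBot ℤ

/-- Square matrices over `Zmax`. -/
abbrev Mat (d : ℕ) : Type := Fin d → Fin d → Zmax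

/-- Tropical matrix product: `(A⊗B) i j = max_k (A i k + B k j)`. -/
def tmul {d : ℕ} (A B : Mat d) : Mat d :=
  fun i j => Finset.univ.sup fun k => A i k + B k j

/-- Maximal entry of a matrix (`-∞` for the all-`⊥` matrix). -/
def tnorm {d : ℕ} (M : Mat d) : Zmax :=
  Finset.univ.sup fun i => Finset.univ.sup fun j => M i j

/-- Product of a list of matrices (junk value, the all-`⊥` matrix, on `[]`;
only used on nonempty lists). -/
def prodL {d : ℕ} : List (Mat d) → Mat d
  | [] => fun _ _ => ⊥
  | [M] => M
  | M :: N :: L => tmul M (prodL (N :: L))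

/-- Tropical identity matrix. -/
def tId (d : ℕ) : Mat d := fun i j => if i = j then (0 : Zmax) else ⊥

/-- Tropical matrix power. -/
def tpow {d : ℕ} (M : Mat d) : ℕ → Mat d
  | 0 => tId d
  | n+1 => tmul M (tpow M n)

/-- The subsemigroup generated by a set of matrices: all nonempty finite products. -/
def semi {d : ℕ} (Γ : Set (Mat d)) : Set (Mat d) :=
  {M | ∃ L : List (Mat d), L ≠ [] ∧ (∀ N ∈ L, N ∈ Γ) ∧ prodL L = M}

/-- Embedding of `Zmax = ℤ ∪ {-∞}` into `EReal`. -/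
noncomputable def z2e (x : Zmax) : EReal :=
  WithBot.recBotCoe ⊥ (fun n : ℤ => ((n : ℝ) : EReal)) x

/-- `minNorm Γ ℓ` is the minimum over all products of `ℓ` matrices from `Γ`
of `‖M₁⋯M_ℓ‖_∞ / ℓ`, as an extended real. -/
noncomputable def minNorm {d : ℕ} (Γ : Set (Mat d)) (ℓ : ℕ) : EReal :=
  sInf {x | ∃ L : List (Mat d), L.length = ℓ ∧ (∀ N ∈ L, N ∈ Γ) ∧
    x = z2e (tnorm (prodL L)) / (ℓ : EReal)}

/-- Joint spectral radius: `inf_{ℓ>0} min{ ‖M₁⋯M_ℓ‖_∞/ℓ : Mᵢ ∈ Γ }`. -/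
noncomputable def jsr {d : ℕ} (Γ : Set (Mat d)) : EReal :=
  ⨅ (ℓ : ℕ) (_ : 0 < ℓ), minNorm Γ ℓ

/-- Weight of the cycle `c 0 → c 1 → ⋯ → c ℓ → c 0` (length `ℓ+1`),
addition of `Fin (ℓ+1)` being cyclic. -/
def cycWeight {d : ℕ} (M : Mat d) {ℓ : ℕ} (c : Fin (ℓ+1) → Fin d) : Zmax :=
  ∑ k : Fin (ℓ+1), M (c k) (c (k+1))

/-- Tropical spectral radius of a single matrix: the maximal average weight of
cycles in the graph of `M` (and `-∞` if there is no cycle of finite weight). -/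
noncomputable def rho {d : ℕ} (M : Mat d) : EReal :=
  ⨆ (ℓ : ℕ) (c : Fin (ℓ+1) → Fin d), z2e (cycWeight M c) / ((ℓ+1 : ℕ) : EReal)

/-- A critical cycle: a cycle with finite weight whose average weight is `rho M`. -/
def IsCritCycle {d : ℕ} (M : Mat d) {ℓ : ℕ} (c : Fin (ℓ+1) → Fin d) : Prop :=
  cycWeight M c ≠ ⊥ ∧ z2e (cycWeight M c) / ((ℓ+1 : ℕ) : EReal) = rho M

/-- Edges of the critical graph: edges lying on some critical cycle. -/
def critEdge {d : ℕ} (M : Mat d) (i j : Fin d) : Prop :=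
  ∃ (ℓ : ℕ) (c : Fin (ℓ+1) → Fin d) (k : Fin (ℓ+1)),
    IsCritCycle M c ∧ c k = i ∧ c (k+1) = j

/-- Vertices of the critical graph. -/
def critVertex {d : ℕ} (M : Mat d) (i : Fin d) : Prop :=
  ∃ j, critEdge M i j ∨ critEdge M j i

/-- Strongly connected components of the critical graph: maximal sets of critical
vertices that are pairwise connected by paths in the critical graph. -/
def IsSCC {d : ℕ} (M : Mat d) (S : Set (Fin d)) : Prop :=
  (∀ i ∈ S, critVertex M i) ∧
  (∀ i ∈ S, ∀ j ∈ S, Relation.ReflTransGen (critEdge M) i j) ∧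
  (∀ T : Set (Fin d), S ⊆ T → (∀ i ∈ T, critVertex M i) →
    (∀ i ∈ T, ∀ j ∈ T, Relation.ReflTransGen (critEdge M) i j) → T = S)

/-- Greatest common divisor of a set of natural numbers. -/
noncomputable def setGcd (A : Set ℕ) : ℕ :=
  sInf {g | (∀ a ∈ A, g ∣ a) ∧ ∀ h, (∀ a ∈ A, h ∣ a) → h ∣ g}

/-- Cyclicity of a strongly connected component `S` of the critical graph of `M`:
the gcd of the lengths of the cycles of the critical graph lying in `S`. -/
noncomputable def cyclicity {d : ℕ} (M : Mat d) (S : Set (Fin d)) : ℕ :=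
  setGcd {n | ∃ (ℓ : ℕ) (c : Fin (ℓ+1) → Fin d), n = ℓ + 1 ∧
    (∀ k, critEdge M (c k) (c (k+1))) ∧ (∀ k, c k ∈ S)}

/-- Ultimate rank of a matrix: the sum of the cyclicities of the strongly
connected components of its critical graph. -/
noncomputable def urk {d : ℕ} (M : Mat d) : ℕ :=
  ∑ᶠ (S : Set (Fin d)) (_ : IsSCC M S), cyclicity M S

/-- `k ⊙ M`: add the integer `k` to every entry. -/
def kadd {d : ℕ} (k : ℤ) (M : Mat d) : Mat d := fun i j => (k : Zmax) + M i j

/-- Value `I M F` computed from an initial row vector, a matrix and a final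
column vector. -/
def runVal {d : ℕ} (I : Fin d → Zmax) (M : Mat d) (F : Fin d → Zmax) : Zmax :=
  Finset.univ.sup fun i => Finset.univ.sup fun j => I i + M i j + F j

/-- The `(2d+1) × (2d+1)` block matrix `M̂` with two diagonal copies of `M`,
a `0` in the bottom-right corner, and `-∞` elsewhere. -/
def hat {d : ℕ} (M : Mat d) : Mat (d + d + 1) := fun i j =>
  if h : (i : ℕ) < d ∧ (j : ℕ) < d then M ⟨i, h.1⟩ ⟨j, h.2⟩
  else if h2 : d ≤ (i : ℕ) ∧ (i : ℕ) < d + d ∧ d ≤ (j : ℕ) ∧ (j : ℕ) < d + d then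
    M ⟨(i : ℕ) - d, by omega⟩ ⟨(j : ℕ) - d, by omega⟩
  else if (i : ℕ) = d + d ∧ (j : ℕ) = d + d then (0 : Zmax) else ⊥

/-! ### Auxiliary lemmas -/

section Aux

open Fin.NatCast

lemma z2e_bot' : z2e ⊥ = ⊥ := rfl
lemma z2e_coe (w : ℤ) : z2e (w : Zmax) = ((w:ℝ):EReal) := rfl

noncomputable def cmean (w : Zmax) (L : ℕ) : EReal := z2e w / ((L:ℕ):EReal)

lemma cmean_coe (w : ℤ) (L : ℕ) : cmean (w : Zmax) L = (((w:ℝ)/(L:ℝ) : ℝ) : EReal) := by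
  show ((w:ℝ):EReal) / _ = _
  rw [show ((L:ℕ):EReal) = (((L:ℝ)):EReal) by exact_mod_cast rfl, ← EReal.coe_div]

lemma cmean_bot (L : ℕ) (hL : 0 < L) : cmean ⊥ L = ⊥ := by
  show (⊥:EReal) / _ = _
  exact EReal.bot_div_of_pos_ne_top (by exact_mod_cast hL) (by simp [EReal.natCast_ne_top])

lemma cmean_zero (L : ℕ) : cmean 0 L = 0 := by
  rw [show (0:Zmax) = ((0:ℤ):Zmax) from rfl, cmean_coe]
  norm_num

lemma rho_def' {d : ℕ} (M : Mat d) :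
    rho M = ⨆ (ℓ : ℕ) (c : Fin (ℓ+1) → Fin d), cmean (cycWeight M c) (ℓ+1) := rfl

lemma cmean_le_rho {d : ℕ} (M : Mat d) (ℓ : ℕ) (c : Fin (ℓ+1) → Fin d) :
    cmean (cycWeight M c) (ℓ+1) ≤ rho M := by
  rw [rho_def']
  exact le_iSup_of_le ℓ (le_iSup (fun c => cmean (cycWeight M c) (ℓ+1)) c)

lemma rho_le {d : ℕ} (M : Mat d) (x : EReal)
    (h : ∀ (ℓ : ℕ) (c : Fin (ℓ+1) → Fin d), cmean (cycWeight M c) (ℓ+1) ≤ x) :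
    rho M ≤ x := by
  rw [rho_def']
  exact iSup_le fun ℓ => iSup_le fun c => h ℓ c

lemma real_mediant (w1 w2 L1 L2 : ℝ) (h1 : 0 < L1) (h2 : 0 < L2) :
    (w1+w2)/(L1+L2) ≤ max (w1/L1) (w2/L2) := by
  rcases le_total (w1/L1) (w2/L2) with h | h
  · apply le_max_of_le_right
    rw [div_le_div_iff₀ (by linarith) h2]
    rw [div_le_div_iff₀ h1 h2] at h
    nlinarith
  · apply le_max_of_le_left
    rw [div_le_div_iff₀ (by linarith) h1]
    rw [div_le_div_iff₀ h2 h1] at h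
    nlinarith

lemma cmean_mediant (w1 w2 : Zmax) (L1 L2 : ℕ) (h1 : 0 < L1) (h2 : 0 < L2) :
    cmean (w1 + w2) (L1 + L2) ≤ max (cmean w1 L1) (cmean w2 L2) := by
  induction w1 using WithBot.recBotCoe with
  | bot => rw [WithBot.bot_add, cmean_bot _ (by omega)]; exact bot_le
  | coe a =>
    induction w2 using WithBot.recBotCoe with
    | bot => rw [WithBot.add_bot, cmean_bot _ (by omega)]; exact bot_le
    | coe b =>
      rw [show ((a:Zmax) + (b:Zmax)) = (((a+b : ℤ)):Zmax) by exact_mod_cast rfl]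
      rw [cmean_coe, cmean_coe, cmean_coe]
      have := real_mediant a b L1 L2 (by exact_mod_cast h1) (by exact_mod_cast h2)
      rcases le_max_iff.1 this with h | h
      · exact le_max_of_le_left (by exact_mod_cast (by push_cast; exact h : ((a:ℝ)+b)/((L1:ℝ)+L2) ≤ (a:ℝ)/L1))
      · exact le_max_of_le_right (by exact_mod_cast (by push_cast; exact h : ((a:ℝ)+b)/((L1:ℝ)+L2) ≤ (b:ℝ)/L2))

end Aux
section Paths

open Fin.NatCast

variable {d : ℕ} (M : Mat d)

/-- weight of the path `p 0 → p 1 → ⋯ → p L`. -/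
def pw (p : ℕ → Fin d) (L : ℕ) : Zmax := ∑ k ∈ Finset.range L, M (p k) (p (k+1))

lemma cycWeight_eq_pw {ℓ : ℕ} (c : Fin (ℓ+1) → Fin d) :
    cycWeight M c = pw M (fun m => c (m : Fin (ℓ+1))) (ℓ+1) := by
  unfold cycWeight pw
  rw [← Fin.sum_univ_eq_sum_range (fun m => M (c (m : Fin (ℓ+1))) (c ((m+1 : ℕ) : Fin (ℓ+1)))) (ℓ+1)]
  apply Finset.sum_congr rfl
  intro k _
  rw [Fin.cast_val_eq_self, Nat.cast_add, Nat.cast_one, Fin.cast_val_eq_self]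

lemma pw_eq_cycWeight {ℓ : ℕ} (p : ℕ → Fin d) (h : p (ℓ+1) = p 0) :
    pw M p (ℓ+1) = cycWeight M (fun k : Fin (ℓ+1) => p k.val) := by
  unfold cycWeight pw
  rw [← Fin.sum_univ_eq_sum_range (fun m => M (p m) (p (m+1))) (ℓ+1)]
  apply Finset.sum_congr rfl
  intro k _
  have hv : ((k + 1 : Fin (ℓ+1))).val = (k.val + 1) % (ℓ+1) := by
    rw [Fin.val_add]
    simp [Fin.val_one', Nat.add_mod]
  show M (p k.val) (p (k.val + 1)) = M (p k.val) (p ((k+1 : Fin (ℓ+1)).val))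
  rw [hv]
  rcases Nat.lt_or_ge (k.val + 1) (ℓ+1) with hk | hk
  · rw [Nat.mod_eq_of_lt hk]
  · have hke : k.val = ℓ := by omega
    rw [hke]
    simp [h]

lemma pw_add (p : ℕ → Fin d) (a b : ℕ) :
    pw M p (a + b) = pw M p a + pw M (fun k => p (a + k)) b := by
  unfold pw
  rw [Finset.sum_range_add]
  rfl

end Paths
section Split

open Fin.NatCast

variable {d : ℕ} (M : Mat d)

lemma pw_split {d : ℕ} (M : Mat d) (p : ℕ → Fin d) (A B1 B2 : ℕ)
    (hper : ∀ m, p (m + (A+B1+B2)) = p m) :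
    pw M p (A+(B1+B2)) = pw M (fun k => p (A+k)) B1 + pw M (fun k => p (A+B1+k)) (B2+A) := by
  rw [pw_add M p A (B1+B2), pw_add M _ B1 B2, pw_add M _ B2 A]
  have f1 : (fun k => p (A+(B1+k))) = (fun k => p (A+B1+k)) := by
    funext k; congr 1; omega
  have f2 : (fun k => p (A+B1+(B2+k))) = p := by
    funext k
    have e : A+B1+(B2+k) = k+(A+B1+B2) := by omega
    rw [e, hper]
  rw [f1, f2]
  abel

lemma cyc_split {d : ℕ} (M : Mat d) {ℓ : ℕ} (c : Fin (ℓ+1) → Fin d) (a b : ℕ)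
    (hab : a < b) (hb : b ≤ ℓ)
    (hc : c (a : Fin (ℓ+1)) = c (b : Fin (ℓ+1))) :
    ∃ (ℓ1 ℓ2 : ℕ) (c1 : Fin (ℓ1+1) → Fin d) (c2 : Fin (ℓ2+1) → Fin d),
      (ℓ1+1) + (ℓ2+1) = ℓ+1 ∧
      cycWeight M c = cycWeight M c1 + cycWeight M c2 := by
  set q : ℕ → Fin d := fun m => c (m : Fin (ℓ+1)) with hq_def
  have hper : ∀ m : ℕ, q (m + (ℓ+1)) = q m := by
    intro m; show c _ = c _; congr 1
    rw [Nat.cast_add, Fin.natCast_self, add_zero]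
  obtain ⟨ℓ1, hℓ1⟩ : ∃ ℓ1, b - a = ℓ1 + 1 := ⟨b - a - 1, by omega⟩
  obtain ⟨ℓ2, hℓ2⟩ : ∃ ℓ2, (ℓ+1) - (b-a) = ℓ2 + 1 := ⟨ℓ - (b-a), by omega⟩
  have hper' : ∀ m : ℕ, q (m + (a+(b-a)+((ℓ+1)-b))) = q m := by
    intro m
    rw [show m + (a+(b-a)+((ℓ+1)-b)) = m + (ℓ+1) by omega]
    exact hper m
  have key := pw_split M q a (b-a) ((ℓ+1)-b) hper'
  refine ⟨ℓ1, ℓ2, fun k => q (a + k.val), fun k => q (b + k.val), by omega, ?_⟩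
  have w1 : pw M (fun k => q (a+k)) (ℓ1+1) = cycWeight M (fun k : Fin (ℓ1+1) => q (a + k.val)) := by
    apply pw_eq_cycWeight
    show q (a + (ℓ1+1)) = q (a + 0)
    rw [show a + (ℓ1+1) = b by omega, show a + 0 = a by omega]
    exact hc.symm
  have w2 : pw M (fun k => q (b+k)) (ℓ2+1) = cycWeight M (fun k : Fin (ℓ2+1) => q (b + k.val)) := by
    apply pw_eq_cycWeight
    show q (b + (ℓ2+1)) = q (b + 0)
    rw [show b + (ℓ2+1) = a + (ℓ+1) by omega, show b + 0 = b by omega, hper]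
    exact hc
  have e0 : pw M q (ℓ+1) = pw M q (a+((b-a)+((ℓ+1)-b))) := by
    congr 1
    omega
  have f3 : (fun k => q (a+(b-a)+k)) = fun k => q (b+k) := by
    funext k; congr 1; omega
  have e5 : pw M (fun k => q (b+k)) (((ℓ+1)-b)+a) = pw M (fun k => q (b+k)) (ℓ2+1) := by
    congr 1
    omega
  rw [cycWeight_eq_pw M c]
  show pw M q (ℓ+1) = _
  rw [e0, key, f3, e5, hℓ1, w1, w2]

/-- the set of cycle means of short cycles (length ≤ d) -/
def shortSet : Set EReal :=
  {x | ∃ ℓ, ℓ < d ∧ ∃ c : Fin (ℓ+1) → Fin d, x = cmean (cycWeight M c) (ℓ+1)}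

lemma shortSet_finite : (shortSet M).Finite := by
  have : shortSet M ⊆ ⋃ ℓ ∈ Finset.range d,
      Set.range (fun c : Fin (ℓ+1) → Fin d => cmean (cycWeight M c) (ℓ+1)) := by
    rintro x ⟨ℓ, hℓ, c, rfl⟩
    exact Set.mem_biUnion (Finset.mem_range.2 hℓ) ⟨c, rfl⟩
  exact Set.Finite.subset (Set.Finite.biUnion (Finset.range d).finite_toSet
    (fun ℓ _ => Set.finite_range _)) this

lemma cmean_le_short {ℓ : ℕ} (c : Fin (ℓ+1) → Fin d) :
    cmean (cycWeight M c) (ℓ+1) ≤ sSup (shortSet M) := by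
  induction ℓ using Nat.strong_induction_on with
  | _ ℓ ih =>
    rcases Nat.lt_or_ge ℓ d with hℓ | hℓ
    · exact le_sSup ⟨ℓ, hℓ, c, rfl⟩
    · -- pigeonhole
      have hcard : Fintype.card (Fin d) < Fintype.card (Fin (ℓ+1)) := by simp; omega
      obtain ⟨x, y, hxy, hcxy⟩ := Fintype.exists_ne_map_eq_of_card_lt c hcard
      -- order x y
      rcases Nat.lt_or_ge x.val y.val with hlt | hge
      case _ =>
        obtain ⟨ℓ1, ℓ2, c1, c2, hsum, hw⟩ := cyc_split M c x.val y.val hlt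
          (by omega) (by rw [Fin.cast_val_eq_self, Fin.cast_val_eq_self]; exact hcxy)
        rw [hw, show ℓ+1 = (ℓ1+1) + (ℓ2+1) from hsum.symm]
        calc cmean (cycWeight M c1 + cycWeight M c2) ((ℓ1+1)+(ℓ2+1))
            ≤ max (cmean (cycWeight M c1) (ℓ1+1)) (cmean (cycWeight M c2) (ℓ2+1)) :=
              cmean_mediant _ _ _ _ (by omega) (by omega)
          _ ≤ sSup (shortSet M) :=
              max_le (ih ℓ1 (by omega) c1) (ih ℓ2 (by omega) c2)
      case _ =>
        have hlt : y.val < x.val := by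
          rcases Nat.lt_or_ge y.val x.val with h | h
          · exact h
          · exact absurd (Fin.ext (by omega)) hxy
        obtain ⟨ℓ1, ℓ2, c1, c2, hsum, hw⟩ := cyc_split M c y.val x.val hlt
          (by omega) (by rw [Fin.cast_val_eq_self, Fin.cast_val_eq_self]; exact hcxy.symm)
        rw [hw, show ℓ+1 = (ℓ1+1) + (ℓ2+1) from hsum.symm]
        calc cmean (cycWeight M c1 + cycWeight M c2) ((ℓ1+1)+(ℓ2+1))
            ≤ max (cmean (cycWeight M c1) (ℓ1+1)) (cmean (cycWeight M c2) (ℓ2+1)) :=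
              cmean_mediant _ _ _ _ (by omega) (by omega)
          _ ≤ sSup (shortSet M) :=
              max_le (ih ℓ1 (by omega) c1) (ih ℓ2 (by omega) c2)

lemma rho_eq_sSup_short : rho M = sSup (shortSet M) := by
  apply le_antisymm
  · exact rho_le M _ (fun ℓ c => cmean_le_short M c)
  · apply sSup_le
    rintro x ⟨ℓ, hℓ, c, rfl⟩
    exact cmean_le_rho M ℓ c

/-- attainment of the spectral radius by a short cycle when `rho M` is not `⊥`. -/
lemma rho_attained (h : rho M ≠ ⊥) :
    ∃ (ℓ : ℕ) (c : Fin (ℓ+1) → Fin d), ℓ < d ∧ cycWeight M c ≠ ⊥ ∧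
      cmean (cycWeight M c) (ℓ+1) = rho M := by
  have hne : (shortSet M).Nonempty := by
    by_contra hne
    rw [Set.not_nonempty_iff_eq_empty] at hne
    rw [rho_eq_sSup_short, hne, sSup_empty] at h
    exact h rfl
  have hmem := Set.Nonempty.csSup_mem hne (shortSet_finite M)
  rw [← rho_eq_sSup_short] at hmem
  obtain ⟨ℓ, hℓ, c, hc⟩ := hmem
  refine ⟨ℓ, c, hℓ, ?_, hc.symm⟩
  intro hbot
  rw [hbot, cmean_bot _ (by omega)] at hc
  exact h hc
end Split
section Hat

open Fin.NatCast

variable {d : ℕ} (M : Mat d)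

/-- the extra vertex -/
def tv (d : ℕ) : Fin (d+d+1) := ⟨d+d, by omega⟩

def lov {d : ℕ} (i : Fin d) : Fin (d+d+1) := ⟨i.val, by omega⟩
def hiv {d : ℕ} (i : Fin d) : Fin (d+d+1) := ⟨d + i.val, by omega⟩

lemma hat_tt : hat M (tv d) (tv d) = 0 := by
  unfold hat tv
  rw [dif_neg (by simp <;> omega), dif_neg (by simp <;> omega), if_pos ⟨rfl, rfl⟩]

lemma hat_lo (i j : Fin d) : hat M (lov i) (lov j) = M i j := by
  unfold hat lov
  rw [dif_pos ⟨i.isLt, j.isLt⟩]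

lemma hat_hi (i j : Fin d) : hat M (hiv i) (hiv j) = M i j := by
  unfold hat hiv
  rw [dif_neg (by simp <;> omega), dif_pos (by refine ⟨by simp, by simp [i.isLt], by simp, by simp [j.isLt]⟩)]
  congr 1 <;> exact Fin.ext (by simp)

lemma hat_ne_bot (i j : Fin (d+d+1)) (h : hat M i j ≠ ⊥) :
    (i.val < d ∧ j.val < d) ∨
    (d ≤ i.val ∧ i.val < d+d ∧ d ≤ j.val ∧ j.val < d+d) ∨
    (i = tv d ∧ j = tv d) := by
  unfold hat at h
  split_ifs at h with h1 h2 h3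
  · exact Or.inl h1
  · exact Or.inr (Or.inl h2)
  · exact Or.inr (Or.inr ⟨Fin.ext h3.1, Fin.ext h3.2⟩)
  · exact absurd rfl h

/-- the zone of a vertex: 0, 1 or 2 -/
def zone {d : ℕ} (i : Fin (d+d+1)) : ℕ :=
  if i.val < d then 0 else if i.val < d+d then 1 else 2

lemma edge_zone {i j : Fin (d+d+1)} (h : hat M i j ≠ ⊥) : zone i = zone j := by
  rcases hat_ne_bot M i j h with ⟨h1, h2⟩ | ⟨h1, h2, h3, h4⟩ | ⟨h1, h2⟩
  · simp [zone, h1, h2]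
  · simp only [zone]
    rw [if_neg (by omega), if_pos h2, if_neg (by omega), if_pos h4]
  · rw [h1, h2]

lemma zone_lov (i : Fin d) : zone (lov i) = 0 := by simp [zone, lov, i.isLt]
lemma zone_hiv (i : Fin d) : zone (hiv i) = 1 := by
  simp only [zone, hiv]
  show (if d + i.val < d then 0 else if d + i.val < d+d then 1 else 2) = 1
  rw [if_neg (by simp), if_pos (by simp [i.isLt])]
lemma zone_tv : zone (tv d) = 2 := by
  simp only [zone, tv]
  show (if d + d < d then 0 else if d + d < d+d then 1 else 2) = 2
  rw [if_neg (by omega), if_neg (by omega)]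

lemma zone_eq_tv {i : Fin (d+d+1)} (h : zone i = 2) : i = tv d := by
  simp only [zone] at h
  have hi := i.isLt
  split_ifs at h <;> first | omega | exact Fin.ext (by show i.val = d+d; omega)

/-- all vertices of a finite-weight cycle of `hat M` lie in one zone -/
lemma cyc_zone {ℓ : ℕ} (c : Fin (ℓ+1) → Fin (d+d+1))
    (h : cycWeight (hat M) c ≠ ⊥) (k : Fin (ℓ+1)) : zone (c k) = zone (c 0) := by
  have hedge : ∀ k : Fin (ℓ+1), hat M (c k) (c (k+1)) ≠ ⊥ := by
    intro k hk
    exact h (WithBot.sum_eq_bot_iff.mpr ⟨k, Finset.mem_univ k, hk⟩)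
  have haux : ∀ m : ℕ, zone (c (m : Fin (ℓ+1))) = zone (c 0) := by
    intro m
    induction m with
    | zero => rfl
    | succ m ih =>
      rw [show ((m+1 : ℕ) : Fin (ℓ+1)) = (m : Fin (ℓ+1)) + 1 by push_cast; ring]
      rw [← edge_zone M (hedge (m : Fin (ℓ+1)))]
      exact ih
  rw [← Fin.cast_val_eq_self k]
  exact haux k.val

lemma cycWeight_lov {ℓ : ℕ} (c : Fin (ℓ+1) → Fin d) :
    cycWeight (hat M) (fun k => lov (c k)) = cycWeight M c := by
  unfold cycWeight
  exact Finset.sum_congr rfl fun k _ => hat_lo M _ _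

lemma cycWeight_hiv {ℓ : ℕ} (c : Fin (ℓ+1) → Fin d) :
    cycWeight (hat M) (fun k => hiv (c k)) = cycWeight M c := by
  unfold cycWeight
  exact Finset.sum_congr rfl fun k _ => hat_hi M _ _

lemma cycWeight_tv (ℓ : ℕ) :
    cycWeight (hat M) (fun _ : Fin (ℓ+1) => tv d) = 0 := by
  unfold cycWeight
  rw [Finset.sum_congr rfl fun k _ => hat_tt M]
  simp

/-- a finite-weight cycle in zone 0 projects to a cycle of `M` -/
lemma proj_zone0 {ℓ : ℕ} (c : Fin (ℓ+1) → Fin (d+d+1)) (h : ∀ k, zone (c k) = 0) :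
    ∃ c' : Fin (ℓ+1) → Fin d, cycWeight (hat M) c = cycWeight M c' := by
  have hlt : ∀ k, (c k).val < d := by
    intro k
    have := h k
    simp only [zone] at this
    split_ifs at this <;> omega
  refine ⟨fun k => ⟨(c k).val, hlt k⟩, ?_⟩
  rw [← cycWeight_lov M (fun k => ⟨(c k).val, hlt k⟩)]
  congr 1

lemma proj_zone1 {ℓ : ℕ} (c : Fin (ℓ+1) → Fin (d+d+1)) (h : ∀ k, zone (c k) = 1) :
    ∃ c' : Fin (ℓ+1) → Fin d, cycWeight (hat M) c = cycWeight M c' := by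
  have hlt : ∀ k, d ≤ (c k).val ∧ (c k).val < d+d := by
    intro k
    have := h k
    simp only [zone] at this
    split_ifs at this <;> omega
  refine ⟨fun k => ⟨(c k).val - d, by have := hlt k; omega⟩, ?_⟩
  rw [← cycWeight_hiv M _]
  congr 1
  funext k
  exact (Fin.ext (by have := hlt k; show d + ((c k).val - d) = (c k).val; omega)).symm

end Hat
section GcdScc

open Fin.NatCast

lemma exists_gcd (A : Set ℕ) : ∃ g : ℕ, (∀ a ∈ A, g ∣ a) ∧ ∀ h, (∀ a ∈ A, h ∣ a) → h ∣ g := by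
  obtain ⟨k, hk⟩ := Int.subgroup_cyclic (AddSubgroup.closure ((fun n : ℕ => (n:ℤ)) '' A))
  refine ⟨k.natAbs, ?_, ?_⟩
  · intro a ha
    have hmem : (a:ℤ) ∈ AddSubgroup.closure ((fun n : ℕ => (n:ℤ)) '' A) :=
      AddSubgroup.subset_closure ⟨a, ha, rfl⟩
    rw [hk, AddSubgroup.mem_closure_singleton] at hmem
    obtain ⟨n, hn⟩ := hmem
    have : k ∣ (a:ℤ) := Dvd.intro_left n (by rw [← hn]; simp [zsmul_eq_mul])
    exact Int.natAbs_dvd_natAbs.mpr (by simpa using this)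
  · intro h hh
    have hle : AddSubgroup.closure ((fun n : ℕ => (n:ℤ)) '' A) ≤ AddSubgroup.zmultiples (h:ℤ) := by
      rw [AddSubgroup.closure_le]
      rintro x ⟨a, ha, rfl⟩
      obtain ⟨m, hm⟩ := hh a ha
      exact AddSubgroup.mem_zmultiples_iff.mpr ⟨(m:ℤ), by rw [zsmul_eq_mul, hm]; push_cast; ring⟩
    have hkmem : k ∈ AddSubgroup.zmultiples (h:ℤ) := by
      apply hle
      rw [hk]
      exact AddSubgroup.mem_closure_singleton.mpr ⟨1, one_smul _ _⟩
    obtain ⟨m, hm⟩ := AddSubgroup.mem_zmultiples_iff.mp hkmem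
    have : (h:ℤ) ∣ k := Dvd.intro_left m (by rw [← hm]; simp [zsmul_eq_mul])
    exact (by simpa using Int.natAbs_dvd_natAbs.mpr this : h ∣ k.natAbs)

lemma setGcd_mem_dvd (A : Set ℕ) : (∀ a ∈ A, setGcd A ∣ a) ∧
    ∀ h, (∀ a ∈ A, h ∣ a) → h ∣ setGcd A := by
  obtain ⟨g, hg⟩ := exists_gcd A
  exact Nat.sInf_mem (⟨g, hg⟩ : {g | (∀ a ∈ A, g ∣ a) ∧ ∀ h, (∀ a ∈ A, h ∣ a) → h ∣ g}.Nonempty)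

lemma setGcd_pos (A : Set ℕ) (n : ℕ) (hn : n ∈ A) (hpos : 0 < n) : 0 < setGcd A := by
  exact Nat.pos_of_dvd_of_pos ((setGcd_mem_dvd A).1 n hn) hpos

lemma setGcd_eq_one_of_one_mem (A : Set ℕ) (h1 : 1 ∈ A) : setGcd A = 1 := by
  have heq : {g | (∀ a ∈ A, g ∣ a) ∧ ∀ h, (∀ a ∈ A, h ∣ a) → h ∣ g} = {1} := by
    ext g
    simp only [Set.mem_setOf_eq, Set.mem_singleton_iff]
    constructor
    · rintro ⟨hdvd, -⟩
      exact Nat.dvd_one.mp (hdvd 1 h1)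
    · rintro rfl
      exact ⟨fun a _ => one_dvd a, fun h hh => hh 1 h1⟩
  unfold setGcd
  rw [heq]
  exact csInf_singleton 1

/-- the canonical SCC containing a critical vertex -/
def sccOf {n : ℕ} (N : Mat n) (v : Fin n) : Set (Fin n) :=
  {x | critVertex N x ∧ Relation.ReflTransGen (critEdge N) x v ∧
       Relation.ReflTransGen (critEdge N) v x}

lemma sccOf_mem {n : ℕ} (N : Mat n) (v : Fin n) (hv : critVertex N v) : v ∈ sccOf N v :=
  ⟨hv, Relation.ReflTransGen.refl, Relation.ReflTransGen.refl⟩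

lemma sccOf_isSCC {n : ℕ} (N : Mat n) (v : Fin n) (hv : critVertex N v) :
    IsSCC N (sccOf N v) := by
  refine ⟨fun i hi => hi.1, fun i hi j hj => hi.2.1.trans hj.2.2, ?_⟩
  intro T hsub hcrit hconn
  ext x
  constructor
  · intro hx
    exact ⟨hcrit x hx, hconn x hx v (hsub (sccOf_mem N v hv)),
      hconn v (hsub (sccOf_mem N v hv)) x hx⟩
  · intro hx
    exact hsub hx

/-- every edge of a critical cycle is a critical edge -/
lemma critCycle_edge {n : ℕ} (N : Mat n) {ℓ : ℕ} (c : Fin (ℓ+1) → Fin n)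
    (hc : IsCritCycle N c) (k : Fin (ℓ+1)) : critEdge N (c k) (c (k+1)) :=
  ⟨ℓ, c, k, hc, rfl, rfl⟩

lemma critCycle_reach {n : ℕ} (N : Mat n) {ℓ : ℕ} (c : Fin (ℓ+1) → Fin n)
    (hc : IsCritCycle N c) (k k' : Fin (ℓ+1)) :
    Relation.ReflTransGen (critEdge N) (c k) (c k') := by
  have aux : ∀ (a m : ℕ), Relation.ReflTransGen (critEdge N) (c (a : Fin (ℓ+1))) (c ((a+m : ℕ) : Fin (ℓ+1))) := by
    intro a m
    induction m with
    | zero => exact Relation.ReflTransGen.refl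
    | succ m ih =>
      refine ih.tail ?_
      rw [show ((a+(m+1) : ℕ) : Fin (ℓ+1)) = ((a+m : ℕ) : Fin (ℓ+1)) + 1 by push_cast; exact (add_assoc _ _ _).symm]
      exact critCycle_edge N c hc _
  have h1 := aux k.val ((ℓ+1) - k.val + k'.val)
  rw [show k.val + ((ℓ+1) - k.val + k'.val) = (ℓ+1) + k'.val by omega] at h1
  rw [show (((ℓ+1) + k'.val : ℕ) : Fin (ℓ+1)) = k' by
    rw [Nat.cast_add, Fin.natCast_self, Fin.cast_val_eq_self, zero_add]] at h1
  rw [Fin.cast_val_eq_self] at h1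
  exact h1

lemma critCycle_mem_sccOf {n : ℕ} (N : Mat n) {ℓ : ℕ} (c : Fin (ℓ+1) → Fin n)
    (hc : IsCritCycle N c) (k : Fin (ℓ+1)) : c k ∈ sccOf N (c 0) := by
  refine ⟨⟨c (k+1), Or.inl (critCycle_edge N c hc k)⟩, critCycle_reach N c hc k 0,
    critCycle_reach N c hc 0 k⟩

lemma cyclicity_sccOf_pos {n : ℕ} (N : Mat n) {ℓ : ℕ} (c : Fin (ℓ+1) → Fin n)
    (hc : IsCritCycle N c) : 0 < cyclicity N (sccOf N (c 0)) := by
  apply setGcd_pos _ (ℓ+1) _ (by omega)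
  exact ⟨ℓ, c, rfl, fun k => critCycle_edge N c hc k, fun k => critCycle_mem_sccOf N c hc k⟩

end GcdScc
section RhoHat

variable {d : ℕ} (M : Mat d)

lemma zone_cases (i : Fin (d+d+1)) : zone i = 0 ∨ zone i = 1 ∨ zone i = 2 := by
  unfold zone
  split_ifs <;> simp

lemma cmean_hat_le {ℓ : ℕ} (c : Fin (ℓ+1) → Fin (d+d+1)) :
    cmean (cycWeight (hat M) c) (ℓ+1) ≤ max (rho M) 0 := by
  by_cases hbot : cycWeight (hat M) c = ⊥
  · rw [hbot, cmean_bot _ (by omega)]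
    exact bot_le
  rcases zone_cases (c 0) with h0 | h1 | h2
  · obtain ⟨c', hc'⟩ := proj_zone0 M c (fun k => by rw [cyc_zone M c hbot k]; exact h0)
    rw [hc']
    exact le_max_of_le_left (cmean_le_rho M ℓ c')
  · obtain ⟨c', hc'⟩ := proj_zone1 M c (fun k => by rw [cyc_zone M c hbot k]; exact h1)
    rw [hc']
    exact le_max_of_le_left (cmean_le_rho M ℓ c')
  · have hconst : c = fun _ => tv d := by
      funext k
      exact zone_eq_tv (by rw [cyc_zone M c hbot k]; exact h2)
    rw [hconst, cycWeight_tv, cmean_zero]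
    exact le_max_right _ _

lemma rho_hat_eq : rho (hat M) = max (rho M) 0 := by
  apply le_antisymm
  · exact rho_le _ _ (fun ℓ c => cmean_hat_le M c)
  · apply max_le
    · apply rho_le M _
      intro ℓ c
      rw [← cycWeight_lov M c]
      exact cmean_le_rho (hat M) ℓ _
    · have h0 := cmean_le_rho (hat M) 0 (fun _ => tv d)
      rwa [cycWeight_tv, cmean_zero] at h0

lemma cmean_eq_crit {n : ℕ} (N : Mat n) {ℓ : ℕ} (c : Fin (ℓ+1) → Fin n) :
    cmean (cycWeight N c) (ℓ+1) = z2e (cycWeight N c) / ((ℓ+1 : ℕ) : EReal) := rfl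

/-! ### the case `rho M < 0` -/

lemma critEdge_hat_lt (h : rho M < 0) (i j : Fin (d+d+1)) :
    critEdge (hat M) i j ↔ i = tv d ∧ j = tv d := by
  have hrho : rho (hat M) = 0 := by rw [rho_hat_eq, max_eq_right h.le]
  constructor
  · rintro ⟨ℓ, c, k, ⟨hw, hm⟩, rfl, rfl⟩
    rw [← cmean_eq_crit, hrho] at hm
    have hzone : ∀ k', zone (c k') = zone (c 0) := cyc_zone M c hw
    rcases zone_cases (c 0) with h0 | h1 | h2
    · obtain ⟨c', hc'⟩ := proj_zone0 M c (fun k' => by rw [hzone k']; exact h0)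
      have := cmean_le_rho M ℓ c'
      rw [← hc', hm] at this
      exact absurd (this.trans_lt h) (lt_irrefl 0)
    · obtain ⟨c', hc'⟩ := proj_zone1 M c (fun k' => by rw [hzone k']; exact h1)
      have := cmean_le_rho M ℓ c'
      rw [← hc', hm] at this
      exact absurd (this.trans_lt h) (lt_irrefl 0)
    · exact ⟨zone_eq_tv (by rw [hzone k]; exact h2), zone_eq_tv (by rw [hzone (k+1)]; exact h2)⟩
  · rintro ⟨rfl, rfl⟩
    refine ⟨0, fun _ => tv d, 0, ⟨?_, ?_⟩, rfl, rfl⟩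
    · rw [cycWeight_tv]
      exact (by simp : (0 : Zmax) ≠ ⊥)
    · rw [← cmean_eq_crit, cycWeight_tv, cmean_zero, hrho]

lemma critVertex_hat_lt (h : rho M < 0) (i : Fin (d+d+1)) :
    critVertex (hat M) i ↔ i = tv d := by
  constructor
  · rintro ⟨j, hj | hj⟩
    · exact ((critEdge_hat_lt M h i j).mp hj).1
    · exact ((critEdge_hat_lt M h j i).mp hj).2
  · rintro rfl
    exact ⟨tv d, Or.inl ((critEdge_hat_lt M h _ _).mpr ⟨rfl, rfl⟩)⟩

lemma isSCC_hat_lt (h : rho M < 0) (S : Set (Fin (d+d+1))) :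
    IsSCC (hat M) S ↔ S = {tv d} := by
  constructor
  · rintro ⟨h1, h2, h3⟩
    have hsub : S ⊆ {tv d} := fun x hx => (critVertex_hat_lt M h x).mp (h1 x hx)
    refine (h3 {tv d} hsub ?_ ?_).symm
    · intro i hi
      rw [Set.mem_singleton_iff] at hi
      rw [hi]
      exact (critVertex_hat_lt M h _).mpr rfl
    · intro i hi j hj
      rw [Set.mem_singleton_iff] at hi hj
      rw [hi, hj]
  · rintro rfl
    refine ⟨?_, ?_, ?_⟩
    · intro i hi
      rw [Set.mem_singleton_iff] at hi
      rw [hi]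
      exact (critVertex_hat_lt M h _).mpr rfl
    · intro i hi j hj
      rw [Set.mem_singleton_iff] at hi hj
      rw [hi, hj]
    · intro T hsub hcrit hconn
      apply Set.eq_of_subset_of_subset
      · intro x hx
        rw [Set.mem_singleton_iff]
        exact (critVertex_hat_lt M h x).mp (hcrit x hx)
      · exact hsub

lemma cyclicity_hat_lt (h : rho M < 0) : cyclicity (hat M) {tv d} = 1 := by
  apply setGcd_eq_one_of_one_mem
  exact ⟨0, fun _ => tv d, rfl, fun k => (critEdge_hat_lt M h _ _).mpr ⟨rfl, rfl⟩,
    fun k => rfl⟩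

lemma urk_hat_lt (h : rho M < 0) : urk (hat M) = 1 := by
  have hset : {S : Set (Fin (d+d+1)) | IsSCC (hat M) S} = {({tv d} : Set (Fin (d+d+1)))} := by
    ext S
    rw [Set.mem_setOf_eq, isSCC_hat_lt M h, Set.mem_singleton_iff]
  calc urk (hat M) = ∑ᶠ S ∈ {S : Set (Fin (d+d+1)) | IsSCC (hat M) S}, cyclicity (hat M) S := rfl
    _ = ∑ᶠ S ∈ ({({tv d} : Set (Fin (d+d+1)))} : Set (Set (Fin (d+d+1)))), cyclicity (hat M) S := by
        rw [hset]
    _ = cyclicity (hat M) {tv d} := finsum_mem_singleton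
    _ = 1 := cyclicity_hat_lt M h

end RhoHat
section Main

variable {d : ℕ} (M : Mat d)

lemma critEdge_hat_zone {i j : Fin (d+d+1)} (h : critEdge (hat M) i j) :
    zone i = zone j := by
  obtain ⟨ℓ, c, k, ⟨hw, -⟩, rfl, rfl⟩ := h
  have hedge : hat M (c k) (c (k+1)) ≠ ⊥ := by
    intro hk
    exact hw (WithBot.sum_eq_bot_iff.mpr ⟨k, Finset.mem_univ k, hk⟩)
  exact edge_zone M hedge

lemma rtg_zone {i j : Fin (d+d+1)} (h : Relation.ReflTransGen (critEdge (hat M)) i j) :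
    zone i = zone j := by
  induction h with
  | refl => rfl
  | tail _ hbc ih => exact ih.trans (critEdge_hat_zone M hbc)

lemma urk_hat_ge (h : 0 ≤ rho M) : 2 ≤ urk (hat M) := by
  classical
  have hrho : rho (hat M) = rho M := by rw [rho_hat_eq, max_eq_left h]
  have hne : rho M ≠ ⊥ := fun hb => by rw [hb] at h; exact absurd (h.trans_lt (by simp)) (lt_irrefl _)
  obtain ⟨ℓ, c, hℓ, hw, hm⟩ := rho_attained M hne
  -- the two lifted critical cycles
  have hcrit1 : IsCritCycle (hat M) (fun k => lov (c k)) := by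
    constructor
    · rw [cycWeight_lov]
      exact hw
    · rw [← cmean_eq_crit, cycWeight_lov, hrho]
      exact hm
  have hcrit2 : IsCritCycle (hat M) (fun k => hiv (c k)) := by
    constructor
    · rw [cycWeight_hiv]
      exact hw
    · rw [← cmean_eq_crit, cycWeight_hiv, hrho]
      exact hm
  set S1 := sccOf (hat M) (lov (c 0)) with hS1
  set S2 := sccOf (hat M) (hiv (c 0)) with hS2
  have hv1 : critVertex (hat M) (lov (c 0)) :=
    ⟨lov (c (0+1)), Or.inl (critCycle_edge (hat M) _ hcrit1 0)⟩
  have hv2 : critVertex (hat M) (hiv (c 0)) :=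
    ⟨hiv (c (0+1)), Or.inl (critCycle_edge (hat M) _ hcrit2 0)⟩
  have hScc1 : IsSCC (hat M) S1 := sccOf_isSCC _ _ hv1
  have hScc2 : IsSCC (hat M) S2 := sccOf_isSCC _ _ hv2
  have hne12 : S1 ≠ S2 := by
    intro heq
    have hmem : lov (c 0) ∈ S2 := by
      rw [← heq]
      exact sccOf_mem _ _ hv1
    have hz := rtg_zone M hmem.2.2
    rw [zone_lov, zone_hiv] at hz
    exact absurd hz (by omega)
  have hc1 : 0 < cyclicity (hat M) S1 := cyclicity_sccOf_pos (hat M) _ hcrit1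
  have hc2 : 0 < cyclicity (hat M) S2 := cyclicity_sccOf_pos (hat M) _ hcrit2
  -- sum
  have hfin : {S : Set (Fin (d+d+1)) | IsSCC (hat M) S}.Finite := Set.toFinite _
  have hurk : urk (hat M) = ∑ S ∈ hfin.toFinset, cyclicity (hat M) S := by
    calc urk (hat M) = ∑ᶠ S ∈ {S : Set (Fin (d+d+1)) | IsSCC (hat M) S}, cyclicity (hat M) S := rfl
      _ = ∑ S ∈ hfin.toFinset, cyclicity (hat M) S :=
          finsum_mem_eq_finite_toFinset_sum _ hfin
  have hsub : ({S1, S2} : Finset (Set (Fin (d+d+1)))) ⊆ hfin.toFinset := by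
    intro S hS
    rw [Finset.mem_insert, Finset.mem_singleton] at hS
    rcases hS with rfl | rfl
    · exact hfin.mem_toFinset.mpr hScc1
    · exact hfin.mem_toFinset.mpr hScc2
  calc (2 : ℕ) ≤ cyclicity (hat M) S1 + cyclicity (hat M) S2 := by omega
    _ = ∑ S ∈ ({S1, S2} : Finset (Set (Fin (d+d+1)))), cyclicity (hat M) S :=
        (Finset.sum_pair hne12).symm
    _ ≤ ∑ S ∈ hfin.toFinset, cyclicity (hat M) S :=
        Finset.sum_le_sum_of_subset hsub
    _ = urk (hat M) := hurk.symm

end Main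
theorem stmt_10 {d : ℕ} (M : Mat d) :
    (rho M < 0 → urk (hat M) = 1) ∧
    (0 ≤ rho M → 2 ≤ urk (hat M)) ∧
    (0 ≤ rho M ↔ 2 ≤ urk (hat M)) := by
  refine ⟨urk_hat_lt M, urk_hat_ge M, urk_hat_ge M, ?_⟩
  intro h2
  rcases lt_or_ge (rho M) 0 with hlt | hge
  · rw [urk_hat_lt M hlt] at h2
    omega
  · exact hge
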